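/- arXiv:1406.4170 — 2 statements merged into one kernel-verified Lean document; each statement's English description precedes it below -/
import Mathlib

section
/- Let G be a graph with Godsil-McKay switching set X and switched graph G'. If all vertices of X have the same degree in G, then the multiset {λ_G(x,y) : x,y ∈ X} of common-neighbor counts of pairs inside X equals the corresponding multiset {λ_{G'}(x,y) : x,y ∈ X} for G'. -/
open Finset
open scoped Classical

variable {V : Type*}

/-- `y` has exactly half of the vertices of `X` as neighbours in `G`. -/
def halfIn (G : SimpleGraph V) (X : Finset V) (y : V) : Prop :=
  2 * (X.filter (G.Adj y)).card = X.card

/-- A Godsil-McKay switching set: `X` induces a regular subgraph, and every vertex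
outside `X` has `0`, `|X|/2` or `|X|` neighbours in `X`. -/
def IsGMSwitchingSet (G : SimpleGraph V) (X : Finset V) : Prop :=
  (∃ k, ∀ x ∈ X, (X.filter (G.Adj x)).card = k) ∧
    ∀ y ∉ X, (X.filter (G.Adj y)).card = 0 ∨ halfIn G X y ∨
      (X.filter (G.Adj y)).card = X.card

/-- The graph obtained from `G` by Godsil-McKay switching with respect to `X`:
for each vertex `y ∉ X` having exactly `|X|/2` neighbours in `X`, the edges from `y`
to `X` are replaced by the edges from `y` to the other `|X|/2` vertices of `X`. -/
noncomputable def GMswitch (G : SimpleGraph V) (X : Finset V) : SimpleGraph V where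
  Adj u v :=
    if u ∈ X ↔ v ∈ X then G.Adj u v
    else if halfIn G X (if u ∈ X then v else u) then ¬ G.Adj u v else G.Adj u v
  symm := by
    constructor
    intro u v h
    by_cases hm : (u ∈ X ↔ v ∈ X)
    · rw [if_pos hm] at h
      rw [if_pos hm.symm]
      exact h.symm
    · have hm' : ¬ (v ∈ X ↔ u ∈ X) := fun hh => hm hh.symm
      rw [if_neg hm] at h
      rw [if_neg hm']
      have he : (if v ∈ X then u else v) = (if u ∈ X then v else u) := by
        by_cases hu : u ∈ X <;> by_cases hv : v ∈ X <;> simp [hu, hv] at hm ⊢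
      rw [he]
      by_cases hc : halfIn G X (if u ∈ X then v else u)
      · rw [if_pos hc] at h ⊢
        exact fun ha => h ha.symm
      · rw [if_neg hc] at h ⊢
        exact h.symm
  loopless := by
    constructor
    intro u h
    rw [if_pos Iff.rfl] at h
    exact G.irrefl h

/-- `lam G x y` is the number of common neighbours of `x` and `y` in `G`. -/
noncomputable def lam [Fintype V] (G : SimpleGraph V) (x y : V) : ℕ :=
  (univ.filter fun z => G.Adj x z ∧ G.Adj y z).card


/-- **Lemma 3(iii), auxiliary fact**: if all vertices of the switching set `X` have the
same degree, then the multiset of common-neighbour counts of (ordered) pairs of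
vertices of `X` is unchanged by Godsil-McKay switching. -/
theorem lam_multiset_inside_unchanged
    {V : Type*} [Fintype V] [DecidableEq V]
    (G : SimpleGraph V) (X : Finset V) (hX : IsGMSwitchingSet G X)
    (hdeg : ∃ d, ∀ x ∈ X, G.degree x = d) :
    ((X ×ˢ X).val.map fun p => lam G p.1 p.2) =
      ((X ×ˢ X).val.map fun p => lam (GMswitch G X) p.1 p.2) := by
  classical
  obtain ⟨⟨k, hk⟩, hout⟩ := hX
  obtain ⟨d, hd⟩ := hdeg
  rcases X.eq_empty_or_nonempty with rfl | hne
  · simp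
  have hXpos : 0 < X.card := Finset.card_pos.mpr hne
  set H : Finset V := (univ \ X).filter (fun z => halfIn G X z) with hHdef
  set F : Finset V := (univ \ X).filter (fun z => (X.filter (G.Adj z)).card = X.card)
    with hFdef
  -- every vertex of `F` is adjacent to every vertex of `X`
  have hFadj : ∀ z ∈ F, ∀ w ∈ X, G.Adj w z := by
    intro z hz w hw
    rw [hFdef, Finset.mem_filter] at hz
    have hsub : X.filter (G.Adj z) = X :=
      Finset.eq_of_subset_of_card_le (Finset.filter_subset _ _) (le_of_eq hz.2.symm)
    have : w ∈ X.filter (G.Adj z) := by rw [hsub]; exact hw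
    exact ((Finset.mem_filter.mp this).2).symm
  -- counting the degree of a vertex of `X` : d = k + |F| + (neighbours in H)
  have hA : ∀ x ∈ X, d = k + F.card + (H.filter (fun z => G.Adj x z)).card := by
    intro x hx
    have hdx : d = (univ.filter (G.Adj x)).card := by
      rw [← hd x hx, SimpleGraph.degree, SimpleGraph.neighborFinset_eq_filter]
    have hsplit : (univ.filter (G.Adj x)).card
        = (X.filter (G.Adj x)).card + ((univ \ X).filter (G.Adj x)).card := by
      rw [← Finset.card_union_of_disjoint
        (Finset.disjoint_filter_filter Finset.disjoint_sdiff),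
        ← Finset.filter_union, Finset.union_sdiff_of_subset (Finset.subset_univ X)]
    -- split `univ \ X` into the zero part, `H` and `F`
    have htri : (univ \ X).filter (G.Adj x)
        = (H.filter (fun z => G.Adj x z)) ∪ F := by
      ext z
      simp only [Finset.mem_union, Finset.mem_filter, hHdef, hFdef,
        Finset.mem_sdiff, Finset.mem_univ, true_and]
      constructor
      · rintro ⟨hzX, hadj⟩
        rcases hout z hzX with h0 | hh | hfull
        · exfalso
          have : x ∈ X.filter (G.Adj z) := Finset.mem_filter.mpr ⟨hx, hadj.symm⟩
          rw [Finset.card_eq_zero.mp h0] at this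
          exact absurd this (Finset.notMem_empty x)
        · exact Or.inl ⟨⟨hzX, hh⟩, hadj⟩
        · exact Or.inr ⟨hzX, hfull⟩
      · rintro (⟨⟨hzX, _⟩, hadj⟩ | ⟨hzX, hfull⟩)
        · exact ⟨hzX, hadj⟩
        · have hzF : z ∈ F := by
            rw [hFdef]
            exact Finset.mem_filter.mpr
              ⟨Finset.mem_sdiff.mpr ⟨Finset.mem_univ z, hzX⟩, hfull⟩
          exact ⟨hzX, hFadj z hzF x hx⟩
    have hdisj : Disjoint (H.filter (fun z => G.Adj x z)) F := by
      rw [Finset.disjoint_left]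
      intro z hz hzF
      rw [hHdef, Finset.mem_filter, Finset.mem_filter] at hz
      rw [hFdef, Finset.mem_filter] at hzF
      have : 2 * X.card = X.card := by
        have := hz.1.2
        rw [halfIn, hzF.2] at this
        exact this
      omega
    rw [hdx, hsplit, hk x hx, htri, Finset.card_union_of_disjoint hdisj]
    ring
  -- double counting: each vertex of X has exactly |H|/2 neighbours in H
  have hHcard : ∀ x ∈ X, H.card = 2 * (H.filter (fun z => G.Adj x z)).card := by
    intro x hx
    have hdc : ∑ z ∈ H, (X.filter (G.Adj z)).card
        = ∑ w ∈ X, (H.filter (fun z => G.Adj w z)).card := by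
      calc ∑ z ∈ H, (X.filter (G.Adj z)).card
          = ∑ z ∈ H, ∑ w ∈ X, if G.Adj z w then 1 else 0 :=
            Finset.sum_congr rfl (fun z _ => Finset.card_filter _ _)
        _ = ∑ w ∈ X, ∑ z ∈ H, if G.Adj z w then 1 else 0 := Finset.sum_comm
        _ = ∑ w ∈ X, (H.filter (fun z => G.Adj w z)).card := by
            refine Finset.sum_congr rfl fun w _ => ?_
            rw [Finset.card_filter]
            exact Finset.sum_congr rfl fun z _ => by rw [G.adj_comm]
    have hhalf : ∀ z ∈ H, 2 * (X.filter (G.Adj z)).card = X.card := by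
      intro z hz
      rw [hHdef, Finset.mem_filter] at hz
      exact hz.2
    have hconst : ∀ w ∈ X, (H.filter (fun z => G.Adj w z)).card
        = (H.filter (fun z => G.Adj x z)).card := by
      intro w hw
      have h1 := hA w hw
      have h2 := hA x hx
      omega
    have hL : 2 * ∑ z ∈ H, (X.filter (G.Adj z)).card = H.card * X.card := by
      rw [Finset.mul_sum]
      rw [Finset.sum_congr rfl hhalf, Finset.sum_const, smul_eq_mul]
    have hR : ∑ w ∈ X, (H.filter (fun z => G.Adj w z)).card
        = X.card * (H.filter (fun z => G.Adj x z)).card := by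
      rw [Finset.sum_congr rfl hconst, Finset.sum_const, smul_eq_mul]
    have hmm : H.card * X.card
        = (2 * (H.filter (fun z => G.Adj x z)).card) * X.card := by
      rw [← hL, hdc, hR]; ring
    exact Nat.eq_of_mul_eq_mul_right hXpos hmm
  -- now prove the pointwise equality
  refine Multiset.map_congr rfl ?_
  intro p hp
  rw [Finset.mem_val, Finset.mem_product] at hp
  obtain ⟨hx, hy⟩ := hp
  set x := p.1
  set y := p.2
  set G' := GMswitch G X with hG'
  -- adjacency descriptions
  have hadjX : ∀ w ∈ X, ∀ z ∈ X, (G'.Adj w z ↔ G.Adj w z) := by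
    intro w hw z hz
    simp only [hG', GMswitch]
    rw [if_pos (iff_of_true hw hz)]
  have hadjH : ∀ w ∈ X, ∀ z ∈ H, (G'.Adj w z ↔ ¬ G.Adj w z) := by
    intro w hw z hz
    rw [hHdef, Finset.mem_filter, Finset.mem_sdiff] at hz
    simp only [hG', GMswitch]
    rw [if_neg (by simp [hw, hz.1.2]), if_pos hw, if_pos hz.2]
  have hadjR : ∀ w ∈ X, ∀ z, z ∉ X → ¬ halfIn G X z → (G'.Adj w z ↔ G.Adj w z) := by
    intro w hw z hzX hzh
    simp only [hG', GMswitch]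
    rw [if_neg (by simp [hw, hzX]), if_pos hw, if_neg hzh]
  -- split the counting set
  set R : Finset V := (univ \ X).filter (fun z => ¬ halfIn G X z) with hRdef
  have hcover : ∀ (P : V → Prop) [DecidablePred P],
      (univ.filter P).card = (X.filter P).card + (H.filter P).card + (R.filter P).card := by
    intro P _
    have h1 : H ∪ R = univ \ X := Finset.filter_union_filter_not_eq _ _
    have h2 : (univ : Finset V) = X ∪ (H ∪ R) := by
      rw [h1, Finset.union_sdiff_of_subset (Finset.subset_univ X)]
    have hd1 : Disjoint H R := Finset.disjoint_filter_filter_not _ _ _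
    have hd2 : Disjoint X (H ∪ R) := by rw [h1]; exact Finset.disjoint_sdiff
    rw [h2, Finset.filter_union,
      Finset.card_union_of_disjoint (Finset.disjoint_filter_filter hd2),
      Finset.filter_union,
      Finset.card_union_of_disjoint (Finset.disjoint_filter_filter hd1)]
    ring
  show lam G x y = lam G' x y
  rw [lam, lam, hcover, hcover]
  have eX : (X.filter fun z => G'.Adj x z ∧ G'.Adj y z)
      = (X.filter fun z => G.Adj x z ∧ G.Adj y z) := by
    refine Finset.filter_congr fun z hz => ?_
    rw [hadjX x hx z hz, hadjX y hy z hz]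
  have eR : (R.filter fun z => G'.Adj x z ∧ G'.Adj y z)
      = (R.filter fun z => G.Adj x z ∧ G.Adj y z) := by
    refine Finset.filter_congr fun z hz => ?_
    rw [hRdef, Finset.mem_filter, Finset.mem_sdiff] at hz
    rw [hadjR x hx z hz.1.2 hz.2, hadjR y hy z hz.1.2 hz.2]
  have eH : (H.filter fun z => G'.Adj x z ∧ G'.Adj y z)
      = (H.filter fun z => ¬ G.Adj x z ∧ ¬ G.Adj y z) := by
    refine Finset.filter_congr fun z hz => ?_
    rw [hadjH x hx z hz, hadjH y hy z hz]
  rw [eX, eR, eH]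
  -- remains: counting on H
  have key : (H.filter fun z => ¬ G.Adj x z ∧ ¬ G.Adj y z).card
      = (H.filter fun z => G.Adj x z ∧ G.Adj y z).card := by
    have e1 : (H.filter fun z => G.Adj x z ∨ G.Adj y z).card
        + (H.filter fun z => ¬ (G.Adj x z ∨ G.Adj y z)).card = H.card :=
      Finset.card_filter_add_card_filter_not _
    have e1' : (H.filter fun z => ¬ (G.Adj x z ∨ G.Adj y z))
        = (H.filter fun z => ¬ G.Adj x z ∧ ¬ G.Adj y z) := by
      refine Finset.filter_congr fun z _ => ?_
      push_neg; rfl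
    have e2 : ((H.filter fun z => G.Adj x z) ∪ (H.filter fun z => G.Adj y z)).card
        + ((H.filter fun z => G.Adj x z) ∩ (H.filter fun z => G.Adj y z)).card
        = (H.filter fun z => G.Adj x z).card + (H.filter fun z => G.Adj y z).card :=
      Finset.card_union_add_card_inter _ _
    rw [← Finset.filter_or, ← Finset.filter_and] at e2
    have hx2 := hHcard x hx
    have hy2 := hHcard y hy
    rw [e1'] at e1
    omega
  omega
end

section
/- Let T be a regular tournament matrix of order m > 1, N = T ⊗ J₂ + I_{2m}, and R = I_m ⊗ (J₂ - I₂). Then RN = J - Nᵀ, where J is the all-ones matrix of order 2m. -/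
open Finset Matrix
open scoped Classical

variable {V : Type*}

open Kronecker

/-- The `2 × 2` all-ones matrix. -/
def J2 : Matrix (Fin 2) (Fin 2) ℝ := Matrix.of fun _ _ => 1

/-- The all-ones matrix of order `2m` (indexed by `Fin m × Fin 2`). -/
def Jbig (m : ℕ) : Matrix (Fin m × Fin 2) (Fin m × Fin 2) ℝ := Matrix.of fun _ _ => 1

/-- `N = T ⊗ J₂ + I`. -/
noncomputable def Nmat {m : ℕ} (T : Matrix (Fin m) (Fin m) ℝ) :
    Matrix (Fin m × Fin 2) (Fin m × Fin 2) ℝ :=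
  T ⊗ₖ J2 + 1

/-- `R = I_m ⊗ (J₂ - I₂)`. -/
noncomputable def Rmat (m : ℕ) : Matrix (Fin m × Fin 2) (Fin m × Fin 2) ℝ :=
  (1 : Matrix (Fin m) (Fin m) ℝ) ⊗ₖ (J2 - 1)

/-- For a regular tournament matrix `T` of order `m > 1`, with `N = T ⊗ J₂ + I` and
`R = I ⊗ (J₂ - I₂)`, we have `RN = J - Nᵀ`. -/
theorem Rmat_mul_Nmat {m : ℕ} (hm : 1 < m)
    (T : Matrix (Fin m) (Fin m) ℝ)
    (h01 : ∀ i j, T i j = 0 ∨ T i j = 1)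
    (htour : T + Tᵀ = Matrix.of (fun _ _ => (1 : ℝ)) - 1)
    (hreg : ∃ c, ∀ i, ∑ j, T i j = c) :
    Rmat m * Nmat T = Jbig m - (Nmat T)ᵀ := by
  ext ⟨i,a⟩ ⟨k,c⟩
  have h1 : T i k + T k i = (if i = k then 0 else 1) := by
    have := congrFun (congrFun htour i) k
    simp [Matrix.one_apply, Matrix.transpose_apply] at this
    by_cases h : i = k <;> simp [h] at this ⊢ <;> linarith
  simp only [Rmat, Nmat, Jbig, J2, Matrix.mul_apply, Fintype.sum_prod_type,
    Matrix.kroneckerMap_apply, Matrix.one_apply, Matrix.add_apply, Matrix.sub_apply,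
    Matrix.transpose_apply, Matrix.of_apply, Fin.sum_univ_two, Prod.mk.injEq]
  fin_cases a <;> fin_cases c <;>
    by_cases h : i = k <;> simp [h, eq_comm (a := k) (b := i)] at h1 ⊢ <;> linarith
end
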